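/- Let u be a C³ solution of Δu + e^{2u} = 0 on an open subset of ℂ. Then the function P = u_{zz} - (u_z)², where u_z = (u_x - i u_y)/2 and u_{zz} = ∂_z(u_z), is holomorphic, i.e. ∂_{z̄}(u_{zz} - u_z²) = 0. -/

import Mathlib

noncomputable def pdx (f : ℂ → ℝ) (z : ℂ) : ℝ := fderiv ℝ f z 1
noncomputable def pdy (f : ℂ → ℝ) (z : ℂ) : ℝ := fderiv ℝ f z Complex.I

noncomputable def pdxC (f : ℂ → ℂ) (z : ℂ) : ℂ := fderiv ℝ f z 1
noncomputable def pdyC (f : ℂ → ℂ) (z : ℂ) : ℂ := fderiv ℝ f z Complex.I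

/-- Wirtinger derivative ∂_z = (∂_x - i ∂_y)/2. -/
noncomputable def dz (f : ℂ → ℂ) (z : ℂ) : ℂ := (pdxC f z - Complex.I * pdyC f z) / 2

/-- Wirtinger derivative ∂_{z̄} = (∂_x + i ∂_y)/2. -/
noncomputable def dzbar (f : ℂ → ℂ) (z : ℂ) : ℂ := (pdxC f z + Complex.I * pdyC f z) / 2

section Aux
variable {Ω : Set ℂ} {F : Type*} [NormedAddCommGroup F] [NormedSpace ℝ F]

lemma contDiffOn_D {f : ℂ → F} {n : WithTop ℕ∞} (hΩ : IsOpen Ω)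
    (hf : ContDiffOn ℝ (n+1) f Ω) (v : ℂ) :
    ContDiffOn ℝ n (fun w => fderiv ℝ f w v) Ω :=
  (hf.fderiv_of_isOpen hΩ le_rfl).clm_apply contDiffOn_const

lemma diffAt_D {f : ℂ → F} {z : ℂ} (hΩ : IsOpen Ω) (hz : z ∈ Ω)
    (hf : ContDiffOn ℝ 2 f Ω) (v : ℂ) :
    DifferentiableAt ℝ (fun w => fderiv ℝ f w v) z := by
  have h : ContDiffOn ℝ 1 (fun w => fderiv ℝ f w v) Ω :=
    contDiffOn_D hΩ (hf.of_le (by norm_num)) v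
  exact (h.differentiableOn one_ne_zero).differentiableAt (hΩ.mem_nhds hz)

lemma fderiv_D {f : ℂ → F} {z : ℂ} (hΩ : IsOpen Ω) (hz : z ∈ Ω)
    (hf : ContDiffOn ℝ 2 f Ω) (v w : ℂ) :
    fderiv ℝ (fun y => fderiv ℝ f y v) z w = fderiv ℝ (fderiv ℝ f) z w v := by
  have hd : DifferentiableAt ℝ (fderiv ℝ f) z :=
    (((hf.fderiv_of_isOpen hΩ (le_refl ((1:WithTop ℕ∞)+1))).differentiableOn
      one_ne_zero).differentiableAt (hΩ.mem_nhds hz))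
  rw [fderiv_clm_apply hd (differentiableAt_const v)]
  simp

lemma fderiv_D_symm {f : ℂ → F} {z : ℂ} (hΩ : IsOpen Ω) (hz : z ∈ Ω)
    (hf : ContDiffOn ℝ 2 f Ω) (v w : ℂ) :
    fderiv ℝ (fun y => fderiv ℝ f y v) z w = fderiv ℝ (fun y => fderiv ℝ f y w) z v := by
  rw [fderiv_D hΩ hz hf, fderiv_D hΩ hz hf]
  exact ((hf.contDiffAt (hΩ.mem_nhds hz)).isSymmSndFDerivAt (by simp)) w v

end Aux
section Wirt
variable {Ω : Set ℂ}

lemma dz_def (f : ℂ → ℂ) :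
    dz f = fun w => (fderiv ℝ f w 1 - Complex.I * fderiv ℝ f w Complex.I) / 2 := rfl
lemma dzbar_def (f : ℂ → ℂ) :
    dzbar f = fun w => (fderiv ℝ f w 1 + Complex.I * fderiv ℝ f w Complex.I) / 2 := rfl

lemma fderiv_combo (p q : ℂ → ℂ) {z : ℂ} (hp : DifferentiableAt ℝ p z)
    (hq : DifferentiableAt ℝ q z) (c : ℂ) (v : ℂ) :
    fderiv ℝ (fun w => (p w + c * q w) / 2) z v
      = (fderiv ℝ p z v + c * fderiv ℝ q z v) / 2 := by
  have h1 : DifferentiableAt ℝ (fun w => c * q w) z := hq.const_mul c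
  rw [show (fun w => (p w + c * q w) / 2) = fun w => (p w + c * q w) * (2⁻¹ : ℂ) by
      funext w; ring,
    fderiv_mul_const (hp.fun_add h1), fderiv_fun_add hp h1, fderiv_const_mul hq c]
  simp [div_eq_mul_inv]; ring

lemma contDiffOn_dz {f : ℂ → ℂ} {n : WithTop ℕ∞} (hΩ : IsOpen Ω)
    (hf : ContDiffOn ℝ (n+1) f Ω) : ContDiffOn ℝ n (dz f) Ω := by
  rw [dz_def]
  exact ((contDiffOn_D hΩ hf 1).sub
    (contDiffOn_const.mul (contDiffOn_D hΩ hf Complex.I))).div_const 2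

lemma diffAt_dz {f : ℂ → ℂ} {z : ℂ} (hΩ : IsOpen Ω) (hz : z ∈ Ω)
    (hf : ContDiffOn ℝ 2 f Ω) : DifferentiableAt ℝ (dz f) z := by
  have h : ContDiffOn ℝ 1 (dz f) Ω := contDiffOn_dz hΩ (hf.of_le (by norm_num))
  exact (h.differentiableOn one_ne_zero).differentiableAt (hΩ.mem_nhds hz)

lemma dz_congr {f g : ℂ → ℂ} {z : ℂ} (h : f =ᶠ[nhds z] g) : dz f z = dz g z := by
  simp only [dz, pdxC, pdyC, h.fderiv_eq]

lemma fderiv_dz {f : ℂ → ℂ} {z : ℂ} (hΩ : IsOpen Ω) (hz : z ∈ Ω)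
    (hf : ContDiffOn ℝ 2 f Ω) (v : ℂ) :
    fderiv ℝ (dz f) z v = (fderiv ℝ (fun y => fderiv ℝ f y 1) z v
      - Complex.I * fderiv ℝ (fun y => fderiv ℝ f y Complex.I) z v) / 2 := by
  have h1 := diffAt_D hΩ hz hf 1
  have hI := diffAt_D hΩ hz hf Complex.I
  rw [dz_def]
  have : (fun w => (fderiv ℝ f w 1 - Complex.I * fderiv ℝ f w Complex.I) / 2)
      = fun w => (fderiv ℝ f w 1 + (-Complex.I) * fderiv ℝ f w Complex.I) / 2 := by
    funext w; ring
  rw [this, fderiv_combo _ _ h1 hI (-Complex.I) v]; ring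

lemma fderiv_dzbar {f : ℂ → ℂ} {z : ℂ} (hΩ : IsOpen Ω) (hz : z ∈ Ω)
    (hf : ContDiffOn ℝ 2 f Ω) (v : ℂ) :
    fderiv ℝ (dzbar f) z v = (fderiv ℝ (fun y => fderiv ℝ f y 1) z v
      + Complex.I * fderiv ℝ (fun y => fderiv ℝ f y Complex.I) z v) / 2 := by
  have h1 := diffAt_D hΩ hz hf 1
  have hI := diffAt_D hΩ hz hf Complex.I
  rw [dzbar_def, fderiv_combo _ _ h1 hI Complex.I v]

lemma dzbar_dz {f : ℂ → ℂ} {z : ℂ} (hΩ : IsOpen Ω) (hz : z ∈ Ω)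
    (hf : ContDiffOn ℝ 2 f Ω) :
    dzbar (dz f) z = (fderiv ℝ (fun y => fderiv ℝ f y 1) z 1
      + fderiv ℝ (fun y => fderiv ℝ f y Complex.I) z Complex.I) / 4 := by
  have hsymm := fderiv_D_symm hΩ hz hf 1 Complex.I
  simp only [dzbar, pdxC, pdyC, fderiv_dz hΩ hz hf]
  rw [hsymm]; ring_nf; rw [Complex.I_sq]; ring

lemma dz_dzbar {f : ℂ → ℂ} {z : ℂ} (hΩ : IsOpen Ω) (hz : z ∈ Ω)
    (hf : ContDiffOn ℝ 2 f Ω) :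
    dz (dzbar f) z = (fderiv ℝ (fun y => fderiv ℝ f y 1) z 1
      + fderiv ℝ (fun y => fderiv ℝ f y Complex.I) z Complex.I) / 4 := by
  have hsymm := fderiv_D_symm hΩ hz hf 1 Complex.I
  simp only [dz, pdxC, pdyC, fderiv_dzbar hΩ hz hf]
  rw [hsymm]; ring_nf; rw [Complex.I_sq]; ring

end Wirt
lemma fderiv_ofReal {g : ℂ → ℝ} {z : ℂ} (hg : DifferentiableAt ℝ g z) (v : ℂ) :
    fderiv ℝ (fun w => (g w : ℂ)) z v = ((fderiv ℝ g z v : ℝ) : ℂ) := by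
  have h := (Complex.ofRealCLM.hasFDerivAt.comp z hg.hasFDerivAt).fderiv
  calc fderiv ℝ (fun w => (g w : ℂ)) z v
      = (Complex.ofRealCLM.comp (fderiv ℝ g z)) v := by rw [← h]; rfl
    _ = _ := rfl

theorem stmt3 (Ω : Set ℂ) (hΩ : IsOpen Ω) (u : ℂ → ℝ)
    (hreg : ContDiffOn ℝ 3 u Ω)
    (hu : ∀ z ∈ Ω, pdx (pdx u) z + pdy (pdy u) z + Real.exp (2 * u z) = 0) :
    ∀ z ∈ Ω,
      dzbar (fun w => dz (dz (fun ζ => (u ζ : ℂ))) w - (dz (fun ζ => (u ζ : ℂ)) w) ^ 2) z = 0 := by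
  intro z hz
  set U : ℂ → ℂ := fun ζ => (u ζ : ℂ) with hUdef
  have hU3 : ContDiffOn ℝ 3 U Ω := Complex.ofRealCLM.contDiff.comp_contDiffOn hreg
  have hU2 : ContDiffOn ℝ 2 U Ω := hU3.of_le (by norm_num)
  have hu2 : ContDiffOn ℝ 2 u Ω := hreg.of_le (by norm_num)
  have hdzU2 : ContDiffOn ℝ 2 (dz U) Ω := contDiffOn_dz hΩ (by norm_num; exact hU3)
  -- the complex Laplacian identity on all of Ω
  have hlap : ∀ w ∈ Ω, dzbar (dz U) w = -((Real.exp (2 * u w) : ℝ) : ℂ) / 4 := by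
    intro w hw
    have key : ∀ v v' : ℂ, fderiv ℝ (fun y => fderiv ℝ U y v) w v'
        = ((fderiv ℝ (fun y => fderiv ℝ u y v) w v' : ℝ) : ℂ) := by
      intro v v'
      have hev : (fun y => fderiv ℝ U y v) =ᶠ[nhds w]
          (fun y => ((fderiv ℝ u y v : ℝ) : ℂ)) := by
        filter_upwards [hΩ.mem_nhds hw] with y hy
        exact fderiv_ofReal ((hreg.contDiffAt (hΩ.mem_nhds hy)).differentiableAt
          (by norm_num)) v
      rw [hev.fderiv_eq]
      exact fderiv_ofReal (diffAt_D hΩ hw hu2 v) v'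
    rw [dzbar_dz hΩ hw hU2, key 1 1, key Complex.I Complex.I]
    have hpde := hu w hw
    have : fderiv ℝ (fun y => fderiv ℝ u y 1) w 1
        + fderiv ℝ (fun y => fderiv ℝ u y Complex.I) w Complex.I
        = -Real.exp (2 * u w) := by
      have : pdx (pdx u) w + pdy (pdy u) w = -Real.exp (2 * u w) := by linarith
      exact this
    rw [show ((fderiv ℝ (fun y => fderiv ℝ u y 1) w 1 : ℝ) : ℂ)
        + ((fderiv ℝ (fun y => fderiv ℝ u y Complex.I) w Complex.I : ℝ) : ℂ)
        = ((fderiv ℝ (fun y => fderiv ℝ u y 1) w 1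
          + fderiv ℝ (fun y => fderiv ℝ u y Complex.I) w Complex.I : ℝ) : ℂ) by push_cast; ring,
      this]
    push_cast; ring
  -- derivatives of u at z and the exponential function
  have hu1 : HasFDerivAt u (fderiv ℝ u z) z :=
    ((hreg.contDiffAt (hΩ.mem_nhds hz)).differentiableAt (by norm_num)).hasFDerivAt
  set ux : ℝ := fderiv ℝ u z 1
  set uy : ℝ := fderiv ℝ u z Complex.I
  set ee : ℝ := Real.exp (2 * u z)
  have hdzUz : dz U z = ((ux : ℂ) - Complex.I * (uy : ℂ)) / 2 := by
    simp only [dz, pdxC, pdyC, hUdef]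
    rw [fderiv_ofReal hu1.differentiableAt 1, fderiv_ofReal hu1.differentiableAt Complex.I]
  have h2u : HasFDerivAt (fun w => 2 * u w) ((2:ℝ) • fderiv ℝ u z) z := hu1.const_mul 2
  have hexp : HasFDerivAt (fun w => Real.exp (2 * u w))
      (Real.exp (2 * u z) • ((2:ℝ) • fderiv ℝ u z)) z :=
    by have := (Real.hasDerivAt_exp (2 * u z)).comp_hasFDerivAt z h2u; exact this
  have hg : HasFDerivAt (fun w => (-(1:ℝ)/4) * Real.exp (2 * u w))
      ((-(1:ℝ)/4) • (Real.exp (2 * u z) • ((2:ℝ) • fderiv ℝ u z))) z :=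
    hexp.const_mul _
  have hgval : ∀ v : ℂ, fderiv ℝ (fun w => (-(1:ℝ)/4) * Real.exp (2 * u w)) z v
      = (-(1:ℝ)/4) * (ee * (2 * fderiv ℝ u z v)) := by
    intro v; rw [hg.fderiv]; simp [ee]; try ring
  -- the value of dzbar (dz (dz U)) at z
  have hF : dzbar (dz (dz U)) z = -(ee : ℂ) / 2 * dz U z := by
    rw [show dzbar (dz (dz U)) z = dz (dzbar (dz U)) z by
      rw [dzbar_dz hΩ hz hdzU2, dz_dzbar hΩ hz hdzU2]]
    have hEv : dzbar (dz U) =ᶠ[nhds z]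
        (fun w => (((-(1:ℝ)/4) * Real.exp (2 * u w) : ℝ) : ℂ)) := by
      filter_upwards [hΩ.mem_nhds hz] with w hw
      rw [hlap w hw]; push_cast; ring
    rw [dz_congr hEv, hdzUz]
    simp only [dz, pdxC, pdyC]
    rw [fderiv_ofReal hg.differentiableAt 1, fderiv_ofReal hg.differentiableAt Complex.I,
      hgval 1, hgval Complex.I]
    push_cast; ring
  -- the square term
  have hh : DifferentiableAt ℝ (dz U) z := diffAt_dz hΩ hz hU2
  have hFdiff : DifferentiableAt ℝ (dz (dz U)) z := diffAt_dz hΩ hz hdzU2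
  have hsq : HasFDerivAt (fun w => dz U w ^ 2)
      (dz U z • fderiv ℝ (dz U) z + dz U z • fderiv ℝ (dz U) z) z := by
    have := hh.hasFDerivAt.mul hh.hasFDerivAt
    rw [show (fun w => dz U w ^ 2) = fun w => dz U w * dz U w by funext w; ring]
    exact this
  have hGsub : ∀ v : ℂ, fderiv ℝ (fun w => dz (dz U) w - dz U w ^ 2) z v
      = fderiv ℝ (dz (dz U)) z v - (2 * dz U z * fderiv ℝ (dz U) z v) := by
    intro v
    rw [fderiv_fun_sub hFdiff hsq.differentiableAt, hsq.fderiv]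
    simp; ring
  have hdzbarF : (fderiv ℝ (dz (dz U)) z 1
      + Complex.I * fderiv ℝ (dz (dz U)) z Complex.I) / 2 = dzbar (dz (dz U)) z := rfl
  have hdzbarh : (fderiv ℝ (dz U) z 1
      + Complex.I * fderiv ℝ (dz U) z Complex.I) / 2 = dzbar (dz U) z := rfl
  show (pdxC _ z + Complex.I * pdyC _ z) / 2 = 0
  simp only [pdxC, pdyC, hGsub]
  have : (fderiv ℝ (dz (dz U)) z 1 - 2 * dz U z * fderiv ℝ (dz U) z 1
      + Complex.I * (fderiv ℝ (dz (dz U)) z Complex.I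
        - 2 * dz U z * fderiv ℝ (dz U) z Complex.I)) / 2
      = dzbar (dz (dz U)) z - 2 * dz U z * dzbar (dz U) z := by
    rw [← hdzbarF, ← hdzbarh]; ring
  rw [this, hF, hlap z hz]
  ring
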